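/- Assume: Ω and A are finite sets; u, v: A × Ω → [0,1]; μ̂ ∈ Δ(Ω) with min_{ω∈Ω} μ̂(ω) ≥ p0 > 0; there exists D > 0 such that for every action a ∈ A there is a belief η_a ∈ Δ(Ω) with Σ_ω η_a(ω) v(a,ω) ≥ Σ_ω η_a(ω) v(a',ω) + D for every a' ≠ a; 0 < ε ≤ p0²D/2; and μ* ∈ Δ(Ω) with ‖μ* − μ̂‖₁ ≤ ε. Suppose π̂ is a direct signaling scheme that is persuasive for μ̂ and maximizes U(μ̂, ·) among all direct signaling schemes persuasive for μ̂. Then there exists a direct signaling scheme π̃ that is persuasive for μ* and satisfies U(μ*, π̃) ≥ U(μ*, π) − 14ε/(p0²D) for every direct signaling scheme π that is persuasive for μ*. -/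

import Mathlib

open Finset

/-- A direct signaling scheme: every row `π ω ·` is a probability distribution on actions. -/
def IsSignalScheme {Ω A : Type*} [Fintype A] (π : Ω → A → ℝ) : Prop :=
  (∀ ω a, 0 ≤ π ω a) ∧ ∀ ω, ∑ a, π ω a = 1

/-- A direct signaling scheme `π` is persuasive for prior `μ`. -/
def IsPersuasive {Ω A : Type*} [Fintype Ω] (v : A → Ω → ℝ) (μ : Ω → ℝ)
    (π : Ω → A → ℝ) : Prop :=
  ∀ a a' : A, 0 ≤ ∑ ω, μ ω * π ω a * (v a ω - v a' ω)

/-- The designer's (obedient) expected utility. -/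
def designerU {Ω A : Type*} [Fintype Ω] [Fintype A] (u : A → Ω → ℝ) (μ : Ω → ℝ)
    (π : Ω → A → ℝ) : ℝ :=
  ∑ ω, μ ω * ∑ a, π ω a * u a ω

lemma designerU_le_one {Ω A : Type*} [Fintype Ω] [Fintype A]
    (u : A → Ω → ℝ) (μ : Ω → ℝ) (π : Ω → A → ℝ)
    (hu : ∀ a ω, u a ω ∈ Set.Icc (0 : ℝ) 1)
    (hμ0 : ∀ ω, 0 ≤ μ ω) (hμ1 : ∑ ω, μ ω = 1)
    (hπ : IsSignalScheme π) : designerU u μ π ≤ 1 := by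
  have h : ∀ ω, μ ω * ∑ a, π ω a * u a ω ≤ μ ω := by
    intro ω
    have h1 : ∑ a, π ω a * u a ω ≤ ∑ a, π ω a :=
      Finset.sum_le_sum fun a _ => by
        nlinarith [(hu a ω).1, (hu a ω).2, hπ.1 ω a]
    calc μ ω * ∑ a, π ω a * u a ω ≤ μ ω * ∑ a, π ω a :=
          mul_le_mul_of_nonneg_left h1 (hμ0 ω)
      _ = μ ω := by rw [hπ.2 ω, mul_one]
  calc designerU u μ π ≤ ∑ ω, μ ω := Finset.sum_le_sum fun ω _ => h ω
    _ = 1 := hμ1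

lemma designerU_close {Ω A : Type*} [Fintype Ω] [Fintype A]
    (u : A → Ω → ℝ) (μ ν : Ω → ℝ) (π : Ω → A → ℝ)
    (hu : ∀ a ω, u a ω ∈ Set.Icc (0 : ℝ) 1)
    (hπ : IsSignalScheme π) :
    designerU u μ π ≤ designerU u ν π + ∑ ω, |μ ω - ν ω| := by
  have h : ∀ ω, μ ω * ∑ a, π ω a * u a ω ≤
      ν ω * ∑ a, π ω a * u a ω + |μ ω - ν ω| := by
    intro ω
    have hs0 : 0 ≤ ∑ a, π ω a * u a ω :=
      Finset.sum_nonneg fun a _ => mul_nonneg (hπ.1 ω a) (hu a ω).1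
    have hs1 : ∑ a, π ω a * u a ω ≤ 1 := by
      calc ∑ a, π ω a * u a ω ≤ ∑ a, π ω a :=
            Finset.sum_le_sum fun a _ => by
              nlinarith [(hu a ω).1, (hu a ω).2, hπ.1 ω a]
        _ = 1 := hπ.2 ω
    have habs : μ ω - ν ω ≤ |μ ω - ν ω| := le_abs_self _
    nlinarith [abs_nonneg (μ ω - ν ω)]
  calc designerU u μ π ≤ ∑ ω, (ν ω * ∑ a, π ω a * u a ω + |μ ω - ν ω|) :=
        Finset.sum_le_sum fun ω _ => h ω
    _ = designerU u ν π + ∑ ω, |μ ω - ν ω| := by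
        rw [Finset.sum_add_distrib]; rfl

/-- Key robustification lemma: given a scheme persuasive for the source prior `μ`,
produce a scheme persuasive for the target prior `ν`, losing at most `2ε/(pD)`. -/
lemma robustify {Ω A : Type*} [Fintype Ω] [Fintype A] [Nonempty A]
    (u v : A → Ω → ℝ) (μ ν : Ω → ℝ) (π : Ω → A → ℝ) (p D ε : ℝ)
    (hu : ∀ a ω, u a ω ∈ Set.Icc (0 : ℝ) 1)
    (hv : ∀ a ω, v a ω ∈ Set.Icc (0 : ℝ) 1)
    (hν0 : ∀ ω, p / 2 ≤ ν ω) (hν1 : ∑ ω, ν ω = 1)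
    (hp : 0 < p) (hD : 0 < D) (hε0 : 0 ≤ ε)
    (hγ1 : 2 * ε / (p * D) ≤ 1)
    (hη : ∀ a : A, ∃ η : Ω → ℝ, (∀ ω, 0 ≤ η ω) ∧ (∑ ω, η ω = 1) ∧
      ∀ a' : A, a' ≠ a → (∑ ω, η ω * v a' ω) + D ≤ ∑ ω, η ω * v a ω)
    (hclose : (∑ ω, |ν ω - μ ω|) ≤ ε)
    (hπ : IsSignalScheme π) (hpers : IsPersuasive v μ π) :
    ∃ π' : Ω → A → ℝ, IsSignalScheme π' ∧ IsPersuasive v ν π' ∧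
      designerU u ν π - 2 * ε / (p * D) ≤ designerU u ν π' := by
  classical
  choose η hη0 hη1 hηD using hη
  -- best action at each state
  have hbest : ∀ ω : Ω, ∃ a : A, ∀ a', v a' ω ≤ v a ω := fun ω =>
    Finite.exists_max (fun a => v a ω)
  choose b hb using hbest
  set γ : ℝ := 2 * ε / (p * D) with hγdef
  have hγ0 : 0 ≤ γ := by positivity
  have hνpos : ∀ ω, 0 < ν ω := fun ω => lt_of_lt_of_le (by positivity) (hν0 ω)
  set εa : A → ℝ := fun a => ∑ ω, |ν ω - μ ω| * π ω a with hεadef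
  have hεa0 : ∀ a, 0 ≤ εa a := fun a =>
    Finset.sum_nonneg fun ω _ => mul_nonneg (abs_nonneg _) (hπ.1 ω a)
  set t : A → ℝ := fun a => εa a / D with htdef
  have ht0 : ∀ a, 0 ≤ t a := fun a => div_nonneg (hεa0 a) hD.le
  have hT : ∑ a, t a ≤ ε / D := by
    have h1 : ∑ a, εa a ≤ ε := by
      have : ∑ a, εa a = ∑ ω, |ν ω - μ ω| := by
        rw [hεadef]
        rw [Finset.sum_comm]
        refine Finset.sum_congr rfl fun ω _ => ?_
        rw [← Finset.mul_sum, hπ.2 ω, mul_one]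
      rw [this]; exact hclose
    calc ∑ a, t a = (∑ a, εa a) / D := by rw [htdef, Finset.sum_div]
      _ ≤ ε / D := by gcongr
  have hηle1 : ∀ a ω, η a ω ≤ 1 := by
    intro a ω
    calc η a ω ≤ ∑ ω', η a ω' :=
          Finset.single_le_sum (fun ω' _ => hη0 a ω') (Finset.mem_univ ω)
      _ = 1 := hη1 a
  set r : Ω → ℝ := fun ω => γ - ∑ a, t a * η a ω / ν ω with hrdef
  have hr0 : ∀ ω, 0 ≤ r ω := by
    intro ω
    have h1 : ∑ a, t a * η a ω / ν ω ≤ (∑ a, t a) / ν ω := by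
      rw [Finset.sum_div]
      refine Finset.sum_le_sum fun a _ => ?_
      have hnum : t a * η a ω ≤ t a := by nlinarith [ht0 a, hη0 a ω, hηle1 a ω]
      exact (div_le_div_iff_of_pos_right (hνpos ω)).mpr hnum
    have h2 : (∑ a, t a) / ν ω ≤ γ := by
      rw [div_le_iff₀ (hνpos ω)]
      have hγp : γ * (p / 2) = ε / D := by
        rw [hγdef]; field_simp
      calc ∑ a, t a ≤ ε / D := hT
        _ = γ * (p / 2) := hγp.symm
        _ ≤ γ * ν ω := by
            have := hν0 ω; nlinarith
    simp only [hrdef, sub_nonneg]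
    exact le_trans h1 h2
  set π' : Ω → A → ℝ := fun ω a =>
    (1 - γ) * π ω a + t a * η a ω / ν ω + r ω * (if a = b ω then 1 else 0)
    with hπ'def
  have hπ'0 : ∀ ω a, 0 ≤ π' ω a := by
    intro ω a
    have h1 : 0 ≤ (1 - γ) * π ω a :=
      mul_nonneg (by linarith) (hπ.1 ω a)
    have h2 : 0 ≤ t a * η a ω / ν ω :=
      div_nonneg (mul_nonneg (ht0 a) (hη0 a ω)) (hνpos ω).le
    have h3 : 0 ≤ r ω * (if a = b ω then 1 else 0) :=
      mul_nonneg (hr0 ω) (by split <;> norm_num)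
    simp only [hπ'def]
    exact add_nonneg (add_nonneg h1 h2) h3
  have hπ'1 : ∀ ω, ∑ a, π' ω a = 1 := by
    intro ω
    simp only [hπ'def]
    rw [Finset.sum_add_distrib, Finset.sum_add_distrib, ← Finset.mul_sum, hπ.2 ω]
    have h1 : ∑ a, r ω * (if a = b ω then 1 else 0) = r ω := by
      rw [← Finset.mul_sum]
      simp
    rw [h1, hrdef]
    ring
  refine ⟨π', ⟨hπ'0, hπ'1⟩, ?_, ?_⟩
  · -- persuasiveness for ν
    intro a a'
    rcases eq_or_ne a a' with rfl | hne
    · apply Finset.sum_nonneg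
      intro ω _
      simp
    · have hexp : ∀ ω, ν ω * π' ω a * (v a ω - v a' ω) =
          (1 - γ) * (ν ω * π ω a * (v a ω - v a' ω)) +
          t a * (η a ω * (v a ω - v a' ω)) +
          ν ω * r ω * (if a = b ω then 1 else 0) * (v a ω - v a' ω) := by
        intro ω
        have hν : ν ω ≠ 0 := (hνpos ω).ne'
        simp only [hπ'def]
        rcases eq_or_ne a (b ω) with heq | hne2
        · simp only [if_pos heq]
          field_simp
        · simp only [if_neg hne2]
          field_simp
      rw [Finset.sum_congr rfl fun ω _ => hexp ω]
      rw [Finset.sum_add_distrib, Finset.sum_add_distrib, ← Finset.mul_sum,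
        ← Finset.mul_sum]
      -- first term
      have h1 : -(εa a) ≤ ∑ ω, ν ω * π ω a * (v a ω - v a' ω) := by
        have hterm : ∀ ω, μ ω * π ω a * (v a ω - v a' ω)
            - |ν ω - μ ω| * π ω a ≤ ν ω * π ω a * (v a ω - v a' ω) := by
          intro ω
          have hvb : |v a ω - v a' ω| ≤ 1 := by
            rw [abs_le]
            constructor <;> nlinarith [(hv a ω).1, (hv a ω).2, (hv a' ω).1, (hv a' ω).2]
          have hπb := hπ.1 ω a
          have habs : |(ν ω - μ ω) * (π ω a * (v a ω - v a' ω))| ≤ |ν ω - μ ω| * π ω a := by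
            rw [abs_mul, abs_mul, abs_of_nonneg hπb]
            nlinarith [abs_nonneg (ν ω - μ ω), abs_nonneg (v a ω - v a' ω),
              mul_nonneg (abs_nonneg (ν ω - μ ω)) hπb]
          have := neg_abs_le ((ν ω - μ ω) * (π ω a * (v a ω - v a' ω)))
          nlinarith
        have := Finset.sum_le_sum fun ω (_ : ω ∈ Finset.univ) => hterm ω
        rw [Finset.sum_sub_distrib] at this
        have hp0 := hpers a a'
        simp only [hεadef]
        linarith
      -- middle term
      have h2 : εa a ≤ t a * ∑ ω, η a ω * (v a ω - v a' ω) := by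
        have hsub : ∑ ω, η a ω * (v a ω - v a' ω) =
            (∑ ω, η a ω * v a ω) - ∑ ω, η a ω * v a' ω := by
          rw [← Finset.sum_sub_distrib]
          exact Finset.sum_congr rfl fun ω _ => by ring
        have hDle : D ≤ ∑ ω, η a ω * (v a ω - v a' ω) := by
          rw [hsub]
          have := hηD a a' hne.symm
          linarith
        have : t a * D ≤ t a * ∑ ω, η a ω * (v a ω - v a' ω) :=
          mul_le_mul_of_nonneg_left hDle (ht0 a)
        have htD : t a * D = εa a := by
          rw [htdef]; field_simp
        linarith
      -- third term
      have h3 : 0 ≤ ∑ ω, ν ω * r ω * (if a = b ω then 1 else 0) * (v a ω - v a' ω) := by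
        apply Finset.sum_nonneg
        intro ω _
        rcases eq_or_ne a (b ω) with heq | hne2
        · have hva : v a' ω ≤ v a ω := by rw [heq]; exact hb ω a'
          rw [if_pos heq, mul_one]
          exact mul_nonneg (mul_nonneg (hνpos ω).le (hr0 ω)) (by linarith)
        · simp [if_neg hne2]
      have hfirst : -(εa a) ≤ (1 - γ) * ∑ ω, ν ω * π ω a * (v a ω - v a' ω) := by
        rcases le_or_gt 0 (∑ ω, ν ω * π ω a * (v a ω - v a' ω)) with hpos | hneg
        · have h0 : 0 ≤ (1 - γ) * ∑ ω, ν ω * π ω a * (v a ω - v a' ω) :=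
            mul_nonneg (by linarith) hpos
          linarith [hεa0 a]
        · have h0 : (∑ ω, ν ω * π ω a * (v a ω - v a' ω)) ≤
              (1 - γ) * ∑ ω, ν ω * π ω a * (v a ω - v a' ω) := by nlinarith
          linarith
      linarith
  · -- utility bound
    have hU : designerU u ν π' = (1 - γ) * designerU u ν π +
        ∑ ω, ν ω * ∑ a, (t a * η a ω / ν ω + r ω * (if a = b ω then 1 else 0)) * u a ω := by
      simp only [designerU, hπ'def]
      rw [Finset.mul_sum, ← Finset.sum_add_distrib]
      refine Finset.sum_congr rfl fun ω _ => ?_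
      have hinner : ∑ a, ((1 - γ) * π ω a + t a * η a ω / ν ω
            + r ω * (if a = b ω then 1 else 0)) * u a ω
          = (1 - γ) * ∑ a, π ω a * u a ω
            + ∑ a, (t a * η a ω / ν ω + r ω * (if a = b ω then 1 else 0)) * u a ω := by
        rw [Finset.mul_sum, ← Finset.sum_add_distrib]
        exact Finset.sum_congr rfl fun a _ => by ring
      rw [hinner]
      ring
    have hrest : 0 ≤ ∑ ω, ν ω * ∑ a, (t a * η a ω / ν ω + r ω * (if a = b ω then 1 else 0)) * u a ω := by
      apply Finset.sum_nonneg
      intro ω _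
      apply mul_nonneg (hνpos ω).le
      apply Finset.sum_nonneg
      intro a _
      apply mul_nonneg _ (hu a ω).1
      have h2 : 0 ≤ t a * η a ω / ν ω :=
        div_nonneg (mul_nonneg (ht0 a) (hη0 a ω)) (hνpos ω).le
      have h3 : 0 ≤ r ω * (if a = b ω then 1 else 0) :=
        mul_nonneg (hr0 ω) (by split <;> norm_num)
      exact add_nonneg h2 h3
    have hU1 : designerU u ν π ≤ 1 :=
      designerU_le_one u ν π hu (fun ω => (hνpos ω).le) hν1 hπ
    rw [hU]
    nlinarith

/-- Robustification, corollary of Lemma 1: robustifying the optimal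
persuasive scheme for the estimate `μ̂` yields a scheme that is persuasive for the true
prior `μ*` and `14ε/(p0²D)`-optimal among all schemes persuasive for `μ*`. -/
theorem robustification_optimal
    {Ω A : Type*} [Fintype Ω] [Fintype A]
    (u v : A → Ω → ℝ) (μhat μstar : Ω → ℝ) (p0 D ε : ℝ) (πhat : Ω → A → ℝ)
    (hu : ∀ a ω, u a ω ∈ Set.Icc (0 : ℝ) 1)
    (hv : ∀ a ω, v a ω ∈ Set.Icc (0 : ℝ) 1)
    (hμ0 : ∀ ω, 0 ≤ μhat ω) (hμ1 : ∑ ω, μhat ω = 1)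
    (hp0 : 0 < p0) (hmin : ∀ ω, p0 ≤ μhat ω)
    (hD : 0 < D)
    (hη : ∀ a : A, ∃ η : Ω → ℝ, (∀ ω, 0 ≤ η ω) ∧ (∑ ω, η ω = 1) ∧
      ∀ a' : A, a' ≠ a → (∑ ω, η ω * v a' ω) + D ≤ ∑ ω, η ω * v a ω)
    (hε0 : 0 < ε) (hε : ε ≤ p0 ^ 2 * D / 2)
    (hstar0 : ∀ ω, 0 ≤ μstar ω) (hstar1 : ∑ ω, μstar ω = 1)
    (hclose : (∑ ω, |μstar ω - μhat ω|) ≤ ε)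
    (hπhat : IsSignalScheme πhat) (hpers : IsPersuasive v μhat πhat)
    (hopt : ∀ π : Ω → A → ℝ, IsSignalScheme π → IsPersuasive v μhat π →
      designerU u μhat π ≤ designerU u μhat πhat) :
    ∃ πt : Ω → A → ℝ, IsSignalScheme πt ∧ IsPersuasive v μstar πt ∧
      ∀ π : Ω → A → ℝ, IsSignalScheme π → IsPersuasive v μstar π →
        designerU u μstar π - 14 * ε / (p0 ^ 2 * D) ≤ designerU u μstar πt := by

  classical
  -- Ω is nonempty
  rcases isEmpty_or_nonempty Ω with hΩ | hΩ
  · exfalso; simp at hμ1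
  obtain ⟨ω0⟩ := hΩ
  -- A is nonempty
  have hA : Nonempty A := by
    by_contra h
    rw [not_nonempty_iff] at h
    have := hπhat.2 ω0
    simp at this
  -- p0 ≤ 1
  have hp1 : p0 ≤ 1 := by
    have h1 := Finset.single_le_sum (f := μhat) (fun ω _ => hμ0 ω) (Finset.mem_univ ω0)
    have := hmin ω0
    linarith [hμ1 ▸ h1]
  have hpos14 : 0 < 14 * ε / (p0 ^ 2 * D) :=
    div_pos (by linarith) (mul_pos (pow_pos hp0 2) hD)
  rcases subsingleton_or_nontrivial A with hsub | hnt
  · -- degenerate case: only one action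
    obtain ⟨a0⟩ := hA
    have huniv : (Finset.univ : Finset A) = {a0} := by
      apply Finset.eq_singleton_iff_unique_mem.mpr
      exact ⟨Finset.mem_univ a0, fun a _ => Subsingleton.elim a a0⟩
    refine ⟨πhat, hπhat, ?_, ?_⟩
    · intro a a'
      have : a = a' := Subsingleton.elim a a'
      subst this
      apply Finset.sum_nonneg
      intro ω _
      simp
    · intro π hπs hπp
      have heq : designerU u μstar π = designerU u μstar πhat := by
        unfold designerU
        refine Finset.sum_congr rfl fun ω _ => ?_
        congr 1
        rw [huniv, Finset.sum_singleton, Finset.sum_singleton]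
        have h1 : π ω a0 = 1 := by have := hπs.2 ω; rwa [huniv, Finset.sum_singleton] at this
        have h2 : πhat ω a0 = 1 := by have := hπhat.2 ω; rwa [huniv, Finset.sum_singleton] at this
        rw [h1, h2]
      rw [heq]
      linarith
  · -- main case
    obtain ⟨a0, a1, hne01⟩ := hnt
    -- D ≤ 1
    have hD1 : D ≤ 1 := by
      obtain ⟨η, hη0, hη1, hηD⟩ := hη a0
      have h1 := hηD a1 hne01.symm
      have h2 : ∑ ω, η ω * v a0 ω ≤ 1 := by
        calc ∑ ω, η ω * v a0 ω ≤ ∑ ω, η ω :=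
              Finset.sum_le_sum fun ω _ => by nlinarith [(hv a0 ω).1, (hv a0 ω).2, hη0 ω]
          _ = 1 := hη1
      have h3 : 0 ≤ ∑ ω, η ω * v a1 ω :=
        Finset.sum_nonneg fun ω _ => mul_nonneg (hη0 ω) (hv a1 ω).1
      linarith
    have hpd : p0 * D ≤ 1 := by nlinarith
    have hεp : ε ≤ p0 / 2 := by nlinarith
    -- pointwise closeness
    have hptw : ∀ ω, |μstar ω - μhat ω| ≤ ε := fun ω => by
      have := Finset.single_le_sum (f := fun ω => |μstar ω - μhat ω|)
        (fun ω _ => abs_nonneg _) (Finset.mem_univ ω)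
      linarith
    have hstarmin : ∀ ω, p0 / 2 ≤ μstar ω := by
      intro ω
      have h1 := hptw ω
      have h2 := neg_abs_le (μstar ω - μhat ω)
      have := hmin ω
      linarith
    have hhatmin : ∀ ω, p0 / 2 ≤ μhat ω := fun ω => by linarith [hmin ω]
    have hγ1 : 2 * ε / (p0 * D) ≤ 1 := by
      rw [div_le_one (mul_pos hp0 hD)]
      nlinarith
    have hclose' : (∑ ω, |μhat ω - μstar ω|) ≤ ε := by
      have : (∑ ω, |μhat ω - μstar ω|) = ∑ ω, |μstar ω - μhat ω| :=
        Finset.sum_congr rfl fun ω _ => abs_sub_comm _ _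
      linarith [this ▸ hclose]
    obtain ⟨πt, hπts, hπtpers, hπtU⟩ :=
      robustify u v μhat μstar πhat p0 D ε hu hv hstarmin hstar1 hp0 hD hε0.le hγ1 hη
        hclose hπhat hpers
    refine ⟨πt, hπts, hπtpers, ?_⟩
    intro π hπs hπp
    obtain ⟨π', hπ's, hπ'pers, hπ'U⟩ :=
      robustify u v μstar μhat π p0 D ε hu hv hhatmin hμ1 hp0 hD hε0.le hγ1 hη
        hclose' hπs hπp
    have c1 : designerU u μstar π ≤ designerU u μhat π + ε := by
      have := designerU_close u μstar μhat π hu hπs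
      linarith
    have c2 : designerU u μhat π ≤ designerU u μhat π' + 2 * ε / (p0 * D) := by linarith
    have c3 : designerU u μhat π' ≤ designerU u μhat πhat := hopt π' hπ's hπ'pers
    have c4 : designerU u μhat πhat ≤ designerU u μstar πhat + ε := by
      have := designerU_close u μhat μstar πhat hu hπhat
      linarith
    have c5 : designerU u μstar πhat ≤ designerU u μstar πt + 2 * ε / (p0 * D) := by linarith
    -- arithmetic: 2*(2ε/(p0 D)) + 2ε ≤ 14ε/(p0²D)
    have hq1 : p0 ^ 2 * D ≤ 1 := by nlinarith
    have hfin : 2 * (2 * ε / (p0 * D)) + 2 * ε ≤ 14 * ε / (p0 ^ 2 * D) := by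
      rw [le_div_iff₀ (mul_pos (pow_pos hp0 2) hD)]
      have hx : 2 * (2 * ε / (p0 * D)) * (p0 ^ 2 * D) = 4 * ε * p0 := by
        field_simp; ring
      nlinarith [mul_nonneg hε0.le (sub_nonneg.mpr hq1),
        mul_nonneg hε0.le (sub_nonneg.mpr hp1)]
    linarith
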